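/- Let k be a field with char k ≠ 2 and let Q = k⟦x, y, z⟧ be the formal power series ring in three variables, with maximal ideal m = (x, y, z). Set I = (x² + y² + z², xyz, x³) and J_1 = (x² + y² + z², y, x³). Then: xyz ∈ mJ_1; for all a_1, a_2, a_3 ∈ Q, if a_1(x² + y² + z²) + a_2 · xyz + a_3 · x³ ∈ mJ_1, then a_1 ∈ m and a_3 ∈ m; and for every g ∈ I with g ∈ mJ_1, there exists a ∈ Q such that g − a · xyz ∈ mI. -/

import Mathlib

open MvPowerSeries Finsupp

section Stmt11Aux
variable {k : Type*} [Field k]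

lemma coeff_fun_stmt11 (f : (Fin 3 →₀ ℕ) → k) (d : Fin 3 →₀ ℕ) :
    coeff d (show MvPowerSeries (Fin 3) k from f) = f d := rfl

lemma constantCoeff_fun_stmt11 (f : (Fin 3 →₀ ℕ) → k) :
    constantCoeff (show MvPowerSeries (Fin 3) k from f) = f 0 := rfl

lemma mem_span_X_iff (a : MvPowerSeries (Fin 3) k) :
    a ∈ Ideal.span {(X 0 : MvPowerSeries (Fin 3) k), X 1, X 2} ↔
      constantCoeff a = 0 := by
  constructor
  · intro h
    have hle : Ideal.span {(X 0 : MvPowerSeries (Fin 3) k), X 1, X 2} ≤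
        RingHom.ker (constantCoeff) := by
      rw [Ideal.span_le]
      rintro b hb
      simp only [Set.mem_insert_iff, Set.mem_singleton_iff] at hb
      rcases hb with rfl | rfl | rfl <;> simp [RingHom.mem_ker]
    exact hle h
  · intro hf
    classical
    set s0 : MvPowerSeries (Fin 3) k := fun d => if d 0 ≠ 0 then coeff d a else 0 with hs0
    set s1 : MvPowerSeries (Fin 3) k := fun d => if d 0 = 0 ∧ d 1 ≠ 0 then coeff d a else 0 with hs1
    set s2 : MvPowerSeries (Fin 3) k :=
      fun d => if d 0 = 0 ∧ d 1 = 0 ∧ d 2 ≠ 0 then coeff d a else 0 with hs2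
    have hsum : a = s0 + s1 + s2 := by
      ext d
      rw [map_add, map_add]
      simp only [coeff_fun_stmt11, hs0, hs1, hs2]
      by_cases h0 : d 0 = 0
      · by_cases h1 : d 1 = 0
        · by_cases h2 : d 2 = 0
          · have hd : d = 0 := by
              ext i
              fin_cases i <;> assumption
            subst hd
            have h := hf
            rw [← coeff_zero_eq_constantCoeff_apply] at h
            simp [h, hf, constantCoeff_fun_stmt11]
          · simp [h0, h1, h2]
        · simp [h0, h1]
      · simp [h0]
    have hd0 : (X 0 : MvPowerSeries (Fin 3) k) ∣ s0 := by
      rw [X_dvd_iff]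
      intro d hd
      simp [coeff_fun_stmt11, hs0, hd]
    have hd1 : (X 1 : MvPowerSeries (Fin 3) k) ∣ s1 := by
      rw [X_dvd_iff]
      intro d hd
      simp [coeff_fun_stmt11, hs1, hd]
    have hd2 : (X 2 : MvPowerSeries (Fin 3) k) ∣ s2 := by
      rw [X_dvd_iff]
      intro d hd
      simp [coeff_fun_stmt11, hs2, hd]
    obtain ⟨q0, hq0⟩ := hd0
    obtain ⟨q1, hq1⟩ := hd1
    obtain ⟨q2, hq2⟩ := hd2
    rw [hsum, hq0, hq1, hq2]
    have h0m : (X 0 : MvPowerSeries (Fin 3) k) ∈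
        Ideal.span {(X 0 : MvPowerSeries (Fin 3) k), X 1, X 2} :=
      Ideal.subset_span (by simp)
    have h1m : (X 1 : MvPowerSeries (Fin 3) k) ∈
        Ideal.span {(X 0 : MvPowerSeries (Fin 3) k), X 1, X 2} :=
      Ideal.subset_span (by simp)
    have h2m : (X 2 : MvPowerSeries (Fin 3) k) ∈
        Ideal.span {(X 0 : MvPowerSeries (Fin 3) k), X 1, X 2} :=
      Ideal.subset_span (by simp)
    exact add_mem (add_mem (Ideal.mul_mem_right _ _ h0m) (Ideal.mul_mem_right _ _ h1m))
      (Ideal.mul_mem_right _ _ h2m)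

lemma coeff_mul_Xpow (φ : MvPowerSeries (Fin 3) k) (d : Fin 3 →₀ ℕ) (s : Fin 3) (n : ℕ) :
    coeff d (φ * X s ^ n) =
      if single s n ≤ d then coeff (d - single s n) φ else 0 := by
  rw [X_pow_eq, coeff_mul_monomial]
  split_ifs <;> simp

lemma coeff_mul_X' (φ : MvPowerSeries (Fin 3) k) (d : Fin 3 →₀ ℕ) (s : Fin 3) :
    coeff d (φ * X s) =
      if single s 1 ≤ d then coeff (d - single s 1) φ else 0 := by
  simpa using coeff_mul_Xpow φ d s 1

lemma key_stmt11 (A B C : MvPowerSeries (Fin 3) k)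
    (h : A * ((X 0 : MvPowerSeries (Fin 3) k) ^ 2 + X 1 ^ 2 + X 2 ^ 2) + B * X 0 ^ 3 + C * X 1
      = 0) :
    constantCoeff A = 0 ∧ constantCoeff B = 0 := by
  have hexp : A * X 0 ^ 2 + A * X 1 ^ 2 + A * X 2 ^ 2 + B * X 0 ^ 3 + C * X 1
      = (0 : MvPowerSeries (Fin 3) k) := by linear_combination h
  have e1 := congrArg (coeff (single 2 2)) hexp
  have e2 := congrArg (coeff (single 0 1 + single 2 2)) hexp
  have e3 := congrArg (coeff (single 0 3)) hexp
  simp [coeff_mul_Xpow, coeff_mul_X', Finsupp.single_le_iff, Finsupp.single_apply] at e1 e2 e3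
  rw [← Finsupp.single_tsub] at e3
  norm_num at e3
  exact ⟨e1, by rwa [e2, zero_add] at e3⟩

end Stmt11Aux

/-- **Example 5.3, detailed computation.** Let `k` be a field of characteristic `≠ 2` and
`Q = k⟦x,y,z⟧` with `𝔪 = (x,y,z)`, `I = (x²+y²+z², xyz, x³)` and `J₁ = (x²+y²+z², y, x³)`.
Then `xyz ∈ 𝔪J₁`; if `a₁(x²+y²+z²) + a₂·xyz + a₃·x³ ∈ 𝔪J₁` then `a₁ ∈ 𝔪` and `a₃ ∈ 𝔪`;
and every `g ∈ I` with `g ∈ 𝔪J₁` satisfies `g - a·xyz ∈ 𝔪I` for some `a`. -/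
theorem stmt11 (k : Type*) [Field k] (hchar : ringChar k ≠ 2)
    (x y z : MvPowerSeries (Fin 3) k)
    (hx : x = X 0) (hy : y = X 1) (hz : z = X 2)
    (m I J1 : Ideal (MvPowerSeries (Fin 3) k))
    (hm : m = Ideal.span {x, y, z})
    (hI : I = Ideal.span {x ^ 2 + y ^ 2 + z ^ 2, x * y * z, x ^ 3})
    (hJ1 : J1 = Ideal.span {x ^ 2 + y ^ 2 + z ^ 2, y, x ^ 3}) :
    x * y * z ∈ m * J1 ∧
    (∀ a₁ a₂ a₃ : MvPowerSeries (Fin 3) k,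
      a₁ * (x ^ 2 + y ^ 2 + z ^ 2) + a₂ * (x * y * z) + a₃ * x ^ 3 ∈ m * J1 →
        a₁ ∈ m ∧ a₃ ∈ m) ∧
    (∀ g ∈ I, g ∈ m * J1 →
      ∃ a : MvPowerSeries (Fin 3) k, g - a * (x * y * z) ∈ m * I) := by
  subst hx hy hz hm hI hJ1
  -- abbreviation for the quadric
  have hsplit : (Ideal.span {(X 0 : MvPowerSeries (Fin 3) k) ^ 2 + X 1 ^ 2 + X 2 ^ 2, X 1,
      X 0 ^ 3}) = Ideal.span {(X 0 : MvPowerSeries (Fin 3) k) ^ 2 + X 1 ^ 2 + X 2 ^ 2} ⊔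
      (Ideal.span {(X 1 : MvPowerSeries (Fin 3) k)} ⊔
        Ideal.span {(X 0 : MvPowerSeries (Fin 3) k) ^ 3}) := by
    rw [Ideal.span_insert, Ideal.span_insert]
  have p2 : ∀ a₁ a₂ a₃ : MvPowerSeries (Fin 3) k,
      a₁ * (X 0 ^ 2 + X 1 ^ 2 + X 2 ^ 2) + a₂ * (X 0 * X 1 * X 2) + a₃ * X 0 ^ 3 ∈
        Ideal.span {(X 0 : MvPowerSeries (Fin 3) k), X 1, X 2} *
          Ideal.span {(X 0 : MvPowerSeries (Fin 3) k) ^ 2 + X 1 ^ 2 + X 2 ^ 2, X 1, X 0 ^ 3} →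
      a₁ ∈ Ideal.span {(X 0 : MvPowerSeries (Fin 3) k), X 1, X 2} ∧
        a₃ ∈ Ideal.span {(X 0 : MvPowerSeries (Fin 3) k), X 1, X 2} := by
    intro a₁ a₂ a₃ hmem
    rw [hsplit, Ideal.mul_sup, Ideal.mul_sup] at hmem
    obtain ⟨p, hp, q, hq, hpq⟩ := Submodule.mem_sup.mp hmem
    obtain ⟨q1, hq1, q2, hq2, hqq⟩ := Submodule.mem_sup.mp hq
    rw [Ideal.mem_mul_span_singleton] at hp hq1 hq2
    obtain ⟨u, hu, rfl⟩ := hp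
    obtain ⟨v, hv, rfl⟩ := hq1
    obtain ⟨w, hw, rfl⟩ := hq2
    have heq0 : (a₁ - u) * ((X 0 : MvPowerSeries (Fin 3) k) ^ 2 + X 1 ^ 2 + X 2 ^ 2) +
        (a₃ - w) * X 0 ^ 3 + (a₂ * (X 0 * X 2) - v) * X 1 = 0 := by
      linear_combination -hpq - hqq
    obtain ⟨hA, hB⟩ := key_stmt11 (a₁ - u) (a₃ - w) (a₂ * (X 0 * X 2) - v) heq0
    rw [map_sub, (mem_span_X_iff u).mp hu, sub_zero] at hA
    rw [map_sub, (mem_span_X_iff w).mp hw, sub_zero] at hB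
    exact ⟨(mem_span_X_iff a₁).mpr hA, (mem_span_X_iff a₃).mpr hB⟩
  refine ⟨?_, p2, ?_⟩
  · have h1 : (X 0 : MvPowerSeries (Fin 3) k) * X 2 ∈
        Ideal.span {(X 0 : MvPowerSeries (Fin 3) k), X 1, X 2} :=
      Ideal.mul_mem_right _ _ (Ideal.subset_span (by simp))
    have h2 : (X 1 : MvPowerSeries (Fin 3) k) ∈
        Ideal.span {(X 0 : MvPowerSeries (Fin 3) k) ^ 2 + X 1 ^ 2 + X 2 ^ 2, X 1, X 0 ^ 3} :=
      Ideal.subset_span (by simp)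
    have heq : (X 0 : MvPowerSeries (Fin 3) k) * X 1 * X 2 = X 0 * X 2 * X 1 := by ring
    rw [heq]
    exact Ideal.mul_mem_mul h1 h2
  · intro g hg hgm
    obtain ⟨a₁, g1, hg1, rfl⟩ := Submodule.mem_span_insert.mp hg
    obtain ⟨a₂, g2, hg2, rfl⟩ := Submodule.mem_span_insert.mp hg1
    obtain ⟨a₃, rfl⟩ := Submodule.mem_span_singleton.mp hg2
    simp only [smul_eq_mul] at hgm ⊢
    have hform : a₁ * ((X 0 : MvPowerSeries (Fin 3) k) ^ 2 + X 1 ^ 2 + X 2 ^ 2) +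
        a₂ * (X 0 * X 1 * X 2) + a₃ * X 0 ^ 3 =
        a₁ * (X 0 ^ 2 + X 1 ^ 2 + X 2 ^ 2) + (a₂ * (X 0 * X 1 * X 2) + a₃ * X 0 ^ 3) := by
      ring
    obtain ⟨ha₁, ha₃⟩ := p2 a₁ a₂ a₃ (by rw [hform]; exact hgm)
    refine ⟨a₂, ?_⟩
    have heq : a₁ * ((X 0 : MvPowerSeries (Fin 3) k) ^ 2 + X 1 ^ 2 + X 2 ^ 2) +
        (a₂ * (X 0 * X 1 * X 2) + a₃ * X 0 ^ 3) - a₂ * (X 0 * X 1 * X 2) =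
        a₁ * (X 0 ^ 2 + X 1 ^ 2 + X 2 ^ 2) + a₃ * X 0 ^ 3 := by ring
    rw [heq]
    exact add_mem
      (Ideal.mul_mem_mul ha₁ (Ideal.subset_span (by simp)))
      (Ideal.mul_mem_mul ha₃ (Ideal.subset_span (by simp)))
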